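/- Let f, f_1, ..., f_J : ℝ^d → ℝ be differentiable with ∇f = (1/J) Σ_j ∇f_j, and suppose ∇f is λ₀-Lipschitz and each ∇f_j is λ_j-Lipschitz. Let θ† satisfy ∇f(θ†) = 0, D₀ = ((1/J)Σ_j |∇f_j(θ†)|²)^{1/2}, Λ = ((1/J)Σ_j λ_j²)^{1/2}, and 0 < η < 1/λ₀. If θ_{k+1} = θ_k - η ∇f_{γ_k}(θ_k) where γ_k is uniform on {1,...,J} independent of θ_k, and R_k = E|θ_k - θ†|², then R_{k+1} - R_k ≥ -2ηλ₀ R_k - 2η²Λ D₀ √(R_k) + η² D₀². -/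

import Mathlib

open MeasureTheory
open scoped ENNReal

private lemma jensen_sqrt {Ω : Type*} [MeasurableSpace Ω] (μ : Measure Ω)
    [IsProbabilityMeasure μ] (X : Ω → ℝ) (hXm : AEStronglyMeasurable X μ)
    (hX2 : Integrable (fun ω => X ω ^ 2) μ) :
    ∫ ω, X ω ∂μ ≤ Real.sqrt (∫ ω, X ω ^ 2 ∂μ) := by
  have hmem : MemLp X 2 μ := (memLp_two_iff_integrable_sq hXm).2 hX2
  have hvar := ProbabilityTheory.variance_nonneg X μ
  rw [ProbabilityTheory.variance_eq_sub hmem] at hvar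
  have h2 : (∫ ω, X ω ∂μ) ^ 2 ≤ ∫ ω, X ω ^ 2 ∂μ := by
    have he : (∫ x, (X ^ 2) x ∂μ) = ∫ ω, X ω ^ 2 ∂μ := by
      apply integral_congr_ae; filter_upwards with ω; simp
    linarith [hvar, he]
  exact Real.le_sqrt_of_sq_le h2

set_option maxHeartbeats 800000 in
theorem stmt_5
    (d J : ℕ) (hJ : 0 < J)
    (f : EuclideanSpace ℝ (Fin d) → ℝ) (fj : Fin J → EuclideanSpace ℝ (Fin d) → ℝ)
    (hdiff : ∀ x, DifferentiableAt ℝ f x)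
    (hdiffj : ∀ j x, DifferentiableAt ℝ (fj j) x)
    (hsum : ∀ x, gradient f x = (J : ℝ)⁻¹ • ∑ j, gradient (fj j) x)
    (lam₀ : ℝ) (lamj : Fin J → ℝ) (hlam₀ : 0 < lam₀)
    (hLip : ∀ x y, ‖gradient f x - gradient f y‖ ≤ lam₀ * ‖x - y‖)
    (hLipj : ∀ j x y, ‖gradient (fj j) x - gradient (fj j) y‖ ≤ lamj j * ‖x - y‖)
    (θdag : EuclideanSpace ℝ (Fin d)) (hθdag : gradient f θdag = 0)
    (D₀ Λ : ℝ)
    (hD₀ : D₀ = Real.sqrt ((J : ℝ)⁻¹ * ∑ j, ‖gradient (fj j) θdag‖ ^ 2))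
    (hΛ : Λ = Real.sqrt ((J : ℝ)⁻¹ * ∑ j, (lamj j) ^ 2))
    (η : ℝ) (hη : 0 < η) (hηlam : η < 1 / lam₀)
    (Ω : Type*) [MeasurableSpace Ω] (μ : Measure Ω) [IsProbabilityMeasure μ]
    (γ : ℕ → Ω → Fin J) (θ : ℕ → Ω → EuclideanSpace ℝ (Fin d))
    (hγmeas : ∀ k, Measurable (γ k)) (hθmeas : ∀ k, Measurable (θ k))
    (hunif : ∀ k j, μ {ω | γ k ω = j} = (J : ℝ≥0∞)⁻¹)
    (hindep : ∀ k, ProbabilityTheory.IndepFun (γ k) (θ k) μ)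
    (hSGD : ∀ k ω, θ (k + 1) ω = θ k ω - η • gradient (fj (γ k ω)) (θ k ω))
    (R : ℕ → ℝ) (hR : ∀ k, R k = ∫ ω, ‖θ k ω - θdag‖ ^ 2 ∂μ)
    (hint : ∀ k, Integrable (fun ω => ‖θ k ω - θdag‖ ^ 2) μ) :
    ∀ k, R (k + 1) - R k ≥
      -2 * η * lam₀ * R k - 2 * η ^ 2 * Λ * D₀ * Real.sqrt (R k) + η ^ 2 * D₀ ^ 2 := by
  intro k
  have hJR : (0:ℝ) < (J:ℝ) := by exact_mod_cast hJ
  have hΛnn : 0 ≤ Λ := hΛ ▸ Real.sqrt_nonneg _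
  have hD₀nn : 0 ≤ D₀ := hD₀ ▸ Real.sqrt_nonneg _
  -- continuity of the gradients of the fj
  have hgcont : ∀ j, Continuous (gradient (fj j)) := by
    intro j
    have : LipschitzWith (Real.toNNReal (lamj j)) (gradient (fj j)) := by
      apply LipschitzWith.of_dist_le_mul
      intro x y
      rw [dist_eq_norm, dist_eq_norm]
      calc ‖gradient (fj j) x - gradient (fj j) y‖ ≤ lamj j * ‖x - y‖ := hLipj j x y
        _ ≤ Real.toNNReal (lamj j) * ‖x - y‖ := by
            apply mul_le_mul_of_nonneg_right (Real.le_coe_toNNReal _) (norm_nonneg _)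
    exact this.continuous
  -- measurability facts
  have hXmeas : Measurable (fun ω => θ k ω - θdag) := (hθmeas k).sub measurable_const
  have hgθmeas : ∀ j, Measurable (fun ω => gradient (fj j) (θ k ω)) :=
    fun j => (hgcont j).measurable.comp (hθmeas k)
  -- integrability facts
  have hnX2 : Integrable (fun ω => ‖θ k ω - θdag‖ ^ 2) μ := hint k
  have hnX1 : Integrable (fun ω => ‖θ k ω - θdag‖) μ := by
    refine (hnX2.add (integrable_const 1)).mono' hXmeas.norm.aestronglyMeasurable ?_
    filter_upwards with ω
    simp only [Pi.add_apply]
    rw [norm_norm]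
    nlinarith [norm_nonneg (θ k ω - θdag), sq_nonneg (‖θ k ω - θdag‖ - 1)]
  have hgbound : ∀ j ω, ‖gradient (fj j) (θ k ω)‖
      ≤ ‖gradient (fj j) θdag‖ + lamj j * ‖θ k ω - θdag‖ := by
    intro j ω
    have h1 := hLipj j (θ k ω) θdag
    have h2 := norm_sub_norm_le (gradient (fj j) (θ k ω)) (gradient (fj j) θdag)
    linarith
  have hBmeas : ∀ j, Measurable (fun ω =>
      (inner ℝ (θ k ω - θdag) (gradient (fj j) (θ k ω)) : ℝ)) :=
    fun j => hXmeas.inner (hgθmeas j)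
  have hBint : ∀ j, Integrable (fun ω =>
      (inner ℝ (θ k ω - θdag) (gradient (fj j) (θ k ω)) : ℝ)) μ := by
    intro j
    refine ((hnX1.const_mul (‖gradient (fj j) θdag‖)).add
      (hnX2.const_mul |lamj j|)).mono' (hBmeas j).aestronglyMeasurable ?_
    filter_upwards with ω
    simp only [Pi.add_apply]
    rw [Real.norm_eq_abs]
    have h1 := abs_real_inner_le_norm (θ k ω - θdag) (gradient (fj j) (θ k ω))
    have h2 := mul_le_mul_of_nonneg_left (hgbound j ω) (norm_nonneg (θ k ω - θdag))
    have h3 : lamj j * ‖θ k ω - θdag‖ ^ 2 ≤ |lamj j| * ‖θ k ω - θdag‖ ^ 2 :=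
      mul_le_mul_of_nonneg_right (le_abs_self _) (sq_nonneg _)
    nlinarith [norm_nonneg (θ k ω - θdag)]
  have hCint : ∀ j, Integrable (fun ω => ‖gradient (fj j) (θ k ω)‖ ^ 2) μ := by
    intro j
    refine (((integrable_const (‖gradient (fj j) θdag‖ ^ 2)).add
      (hnX1.const_mul (2 * ‖gradient (fj j) θdag‖ * |lamj j|))).add
      (hnX2.const_mul ((lamj j) ^ 2))).mono'
      ((hgθmeas j).norm.pow_const 2).aestronglyMeasurable ?_
    filter_upwards with ω
    simp only [Pi.add_apply]
    rw [Real.norm_eq_abs, abs_of_nonneg (sq_nonneg _)]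
    have h2 := hgbound j ω
    have h3 : lamj j * ‖θ k ω - θdag‖ ≤ |lamj j| * ‖θ k ω - θdag‖ :=
      mul_le_mul_of_nonneg_right (le_abs_self _) (norm_nonneg _)
    have h4 : ‖gradient (fj j) (θ k ω)‖
        ≤ ‖gradient (fj j) θdag‖ + |lamj j| * ‖θ k ω - θdag‖ := by linarith
    have h5 : (0:ℝ) ≤ ‖gradient (fj j) θdag‖ + |lamj j| * ‖θ k ω - θdag‖ := by positivity
    nlinarith [norm_nonneg (gradient (fj j) (θ k ω)), sq_abs (lamj j),
      norm_nonneg (θ k ω - θdag), abs_nonneg (lamj j), norm_nonneg (gradient (fj j) θdag)]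
  have hGint : ∀ j, Integrable (fun ω => ‖θ k ω - θdag‖ ^ 2
      - 2 * η * (inner ℝ (θ k ω - θdag) (gradient (fj j) (θ k ω)) : ℝ)
      + η ^ 2 * ‖gradient (fj j) (θ k ω)‖ ^ 2) μ :=
    fun j => (hnX2.sub ((hBint j).const_mul (2 * η))).add ((hCint j).const_mul (η ^ 2))
  -- pointwise expansion of the SGD step
  have hpt : ∀ ω, ‖θ (k + 1) ω - θdag‖ ^ 2 = ‖θ k ω - θdag‖ ^ 2
      - 2 * η * (inner ℝ (θ k ω - θdag) (gradient (fj (γ k ω)) (θ k ω)) : ℝ)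
      + η ^ 2 * ‖gradient (fj (γ k ω)) (θ k ω)‖ ^ 2 := by
    intro ω
    have h0 : θ (k + 1) ω - θdag
        = (θ k ω - θdag) - η • gradient (fj (γ k ω)) (θ k ω) := by
      rw [hSGD k ω]; abel
    rw [h0, norm_sub_sq_real, real_inner_smul_right, norm_smul, Real.norm_eq_abs, mul_pow,
      sq_abs]
    ring
  -- per-index integral via independence
  have key : ∀ j, ∫ ω, (if γ k ω = j then (1:ℝ) else 0) * (‖θ k ω - θdag‖ ^ 2
      - 2 * η * (inner ℝ (θ k ω - θdag) (gradient (fj j) (θ k ω)) : ℝ)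
      + η ^ 2 * ‖gradient (fj j) (θ k ω)‖ ^ 2) ∂μ
      = (J:ℝ)⁻¹ * ∫ ω, (‖θ k ω - θdag‖ ^ 2
      - 2 * η * (inner ℝ (θ k ω - θdag) (gradient (fj j) (θ k ω)) : ℝ)
      + η ^ 2 * ‖gradient (fj j) (θ k ω)‖ ^ 2) ∂μ := by
    intro j
    set G : EuclideanSpace ℝ (Fin d) → ℝ := fun x => ‖x - θdag‖ ^ 2
      - 2 * η * (inner ℝ (x - θdag) (gradient (fj j) x) : ℝ)
      + η ^ 2 * ‖gradient (fj j) x‖ ^ 2 with hGdef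
    have hGcont : Continuous G := by
      apply Continuous.add
      · apply Continuous.sub
        · exact ((continuous_id.sub continuous_const).norm.pow 2)
        · exact continuous_const.mul
            ((continuous_id.sub continuous_const).inner (hgcont j))
      · exact continuous_const.mul ((hgcont j).norm.pow 2)
    have hφmeas : Measurable (fun i : Fin J => if i = j then (1:ℝ) else 0) :=
      measurable_from_top
    have hIndep := (hindep k).comp hφmeas hGcont.measurable
    have h1 := ProbabilityTheory.IndepFun.integral_mul_eq_mul_integral hIndep
      ((measurable_from_top.comp (hγmeas k)).aestronglyMeasurable)
      ((hGcont.measurable.comp (hθmeas k)).aestronglyMeasurable)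
    have h2 : ∫ ω, (if γ k ω = j then (1:ℝ) else 0) ∂μ = (J:ℝ)⁻¹ := by
      have he : (fun ω => if γ k ω = j then (1:ℝ) else 0)
          = Set.indicator {ω | γ k ω = j} (fun _ => (1:ℝ)) := by
        ext ω; simp [Set.indicator_apply, Set.mem_setOf_eq]
      have hms : MeasurableSet {ω | γ k ω = j} := hγmeas k (measurableSet_singleton j)
      rw [he, integral_indicator_const (1:ℝ) hms, measureReal_def, hunif k j, smul_eq_mul, mul_one,
        ENNReal.toReal_inv, ENNReal.toReal_natCast]
    calc ∫ ω, (if γ k ω = j then (1:ℝ) else 0) * (‖θ k ω - θdag‖ ^ 2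
          - 2 * η * (inner ℝ (θ k ω - θdag) (gradient (fj j) (θ k ω)) : ℝ)
          + η ^ 2 * ‖gradient (fj j) (θ k ω)‖ ^ 2) ∂μ
        = ∫ ω, (((fun i : Fin J => if i = j then (1:ℝ) else 0) ∘ γ k)
            * (G ∘ θ k)) ω ∂μ := by
          apply integral_congr_ae; filter_upwards with ω
          simp [Function.comp, hGdef]
      _ = (∫ ω, ((fun i : Fin J => if i = j then (1:ℝ) else 0) ∘ γ k) ω ∂μ)
            * ∫ ω, (G ∘ θ k) ω ∂μ := h1
      _ = (J:ℝ)⁻¹ * ∫ ω, (‖θ k ω - θdag‖ ^ 2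
          - 2 * η * (inner ℝ (θ k ω - θdag) (gradient (fj j) (θ k ω)) : ℝ)
          + η ^ 2 * ‖gradient (fj j) (θ k ω)‖ ^ 2) ∂μ := by
          rw [show (∫ ω, ((fun i : Fin J => if i = j then (1:ℝ) else 0) ∘ γ k) ω ∂μ)
            = ∫ ω, (if γ k ω = j then (1:ℝ) else 0) ∂μ from rfl, h2]
          rfl
  -- the identity for R (k+1)
  have hRk1 : R (k + 1) = ∑ j, (J:ℝ)⁻¹ * ∫ ω, (‖θ k ω - θdag‖ ^ 2
      - 2 * η * (inner ℝ (θ k ω - θdag) (gradient (fj j) (θ k ω)) : ℝ)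
      + η ^ 2 * ‖gradient (fj j) (θ k ω)‖ ^ 2) ∂μ := by
    rw [hR]
    have e1 : ∀ ω, ‖θ (k + 1) ω - θdag‖ ^ 2
        = ∑ j, (if γ k ω = j then (1:ℝ) else 0) * (‖θ k ω - θdag‖ ^ 2
          - 2 * η * (inner ℝ (θ k ω - θdag) (gradient (fj j) (θ k ω)) : ℝ)
          + η ^ 2 * ‖gradient (fj j) (θ k ω)‖ ^ 2) := by
      intro ω
      rw [hpt ω]
      rw [show ∀ (F : Fin J → ℝ), (∑ j, (if γ k ω = j then (1:ℝ) else 0) * F j)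
          = F (γ k ω) from ?_]
      · intro F
        have := Finset.sum_ite_eq Finset.univ (γ k ω) F
        simpa [ite_mul] using this
    calc (∫ ω, ‖θ (k + 1) ω - θdag‖ ^ 2 ∂μ)
        = ∫ ω, ∑ j, (if γ k ω = j then (1:ℝ) else 0) * (‖θ k ω - θdag‖ ^ 2
          - 2 * η * (inner ℝ (θ k ω - θdag) (gradient (fj j) (θ k ω)) : ℝ)
          + η ^ 2 * ‖gradient (fj j) (θ k ω)‖ ^ 2) ∂μ := by
          apply integral_congr_ae; filter_upwards with ω; exact e1 ω
      _ = ∑ j, ∫ ω, (if γ k ω = j then (1:ℝ) else 0) * (‖θ k ω - θdag‖ ^ 2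
          - 2 * η * (inner ℝ (θ k ω - θdag) (gradient (fj j) (θ k ω)) : ℝ)
          + η ^ 2 * ‖gradient (fj j) (θ k ω)‖ ^ 2) ∂μ := by
          apply integral_finset_sum
          intro j _
          refine (hGint j).bdd_mul (c := 1) ?_ (Filter.Eventually.of_forall fun ω => ?_)
          · have hms : MeasurableSet {ω | γ k ω = j} := hγmeas k (measurableSet_singleton j)
            exact (Measurable.ite hms measurable_const measurable_const).aestronglyMeasurable
          · by_cases h : γ k ω = j <;> simp [h]
      _ = ∑ j, (J:ℝ)⁻¹ * ∫ ω, (‖θ k ω - θdag‖ ^ 2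
          - 2 * η * (inner ℝ (θ k ω - θdag) (gradient (fj j) (θ k ω)) : ℝ)
          + η ^ 2 * ‖gradient (fj j) (θ k ω)‖ ^ 2) ∂μ := by
          exact Finset.sum_congr rfl fun j _ => key j
  -- split each integral
  have hsplit : ∀ j, ∫ ω, (‖θ k ω - θdag‖ ^ 2
      - 2 * η * (inner ℝ (θ k ω - θdag) (gradient (fj j) (θ k ω)) : ℝ)
      + η ^ 2 * ‖gradient (fj j) (θ k ω)‖ ^ 2) ∂μ
      = R k - 2 * η * (∫ ω, (inner ℝ (θ k ω - θdag) (gradient (fj j) (θ k ω)) : ℝ) ∂μ)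
      + η ^ 2 * ∫ ω, ‖gradient (fj j) (θ k ω)‖ ^ 2 ∂μ := by
    intro j
    have hI2 : Integrable (fun ω =>
        2 * η * (inner ℝ (θ k ω - θdag) (gradient (fj j) (θ k ω)) : ℝ)) μ :=
      (hBint j).const_mul (2 * η)
    have hI1 : Integrable (fun ω => ‖θ k ω - θdag‖ ^ 2
        - 2 * η * (inner ℝ (θ k ω - θdag) (gradient (fj j) (θ k ω)) : ℝ)) μ := hnX2.sub hI2
    have hI3 : Integrable (fun ω => η ^ 2 * ‖gradient (fj j) (θ k ω)‖ ^ 2) μ :=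
      (hCint j).const_mul (η ^ 2)
    rw [integral_add hI1 hI3, integral_sub hnX2 hI2, integral_const_mul,
      integral_const_mul, hR]
  set b : Fin J → ℝ :=
    fun j => ∫ ω, (inner ℝ (θ k ω - θdag) (gradient (fj j) (θ k ω)) : ℝ) ∂μ with hbdef
  set cc : Fin J → ℝ := fun j => ∫ ω, ‖gradient (fj j) (θ k ω)‖ ^ 2 ∂μ with hccdef
  have hRk1' : R (k + 1) = R k - 2 * η * ((J:ℝ)⁻¹ * ∑ j, b j)
      + η ^ 2 * ((J:ℝ)⁻¹ * ∑ j, cc j) := by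
    rw [hRk1]
    have : ∀ j : Fin J, (J:ℝ)⁻¹ * ∫ ω, (‖θ k ω - θdag‖ ^ 2
        - 2 * η * (inner ℝ (θ k ω - θdag) (gradient (fj j) (θ k ω)) : ℝ)
        + η ^ 2 * ‖gradient (fj j) (θ k ω)‖ ^ 2) ∂μ
        = (J:ℝ)⁻¹ * (R k - 2 * η * b j + η ^ 2 * cc j) := by
      intro j; rw [hsplit j]
    rw [Finset.sum_congr rfl fun j _ => this j]
    have hcard : (Finset.univ : Finset (Fin J)).card = J := by simp
    rw [show (∑ j : Fin J, (J:ℝ)⁻¹ * (R k - 2 * η * b j + η ^ 2 * cc j))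
        = (J:ℝ)⁻¹ * ∑ j : Fin J, (R k - 2 * η * b j + η ^ 2 * cc j) from
        (Finset.mul_sum _ _ _).symm]
    rw [Finset.sum_add_distrib, Finset.sum_sub_distrib, Finset.sum_const, hcard,
      ← Finset.mul_sum, ← Finset.mul_sum, nsmul_eq_mul]
    have hJne : (J:ℝ) ≠ 0 := ne_of_gt hJR
    have hc : (J:ℝ)⁻¹ * ((J:ℝ) * R k) = R k := by
      rw [← mul_assoc, inv_mul_cancel₀ hJne, one_mul]
    calc (J:ℝ)⁻¹ * ((J:ℝ) * R k - 2 * η * ∑ j, b j + η ^ 2 * ∑ j, cc j)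
        = (J:ℝ)⁻¹ * ((J:ℝ) * R k) - 2 * η * ((J:ℝ)⁻¹ * ∑ j, b j)
          + η ^ 2 * ((J:ℝ)⁻¹ * ∑ j, cc j) := by ring
      _ = R k - 2 * η * ((J:ℝ)⁻¹ * ∑ j, b j) + η ^ 2 * ((J:ℝ)⁻¹ * ∑ j, cc j) := by
          rw [hc]
  -- bound the cross term
  have hmb : (J:ℝ)⁻¹ * ∑ j, b j ≤ lam₀ * R k := by
    have h1 : (J:ℝ)⁻¹ * ∑ j, b j = ∫ ω, (J:ℝ)⁻¹
        * ∑ j, (inner ℝ (θ k ω - θdag) (gradient (fj j) (θ k ω)) : ℝ) ∂μ := by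
      rw [hbdef, ← integral_finset_sum _ (fun j _ => hBint j), ← integral_const_mul]
    have h2 : ∀ ω, (J:ℝ)⁻¹ * ∑ j, (inner ℝ (θ k ω - θdag) (gradient (fj j) (θ k ω)) : ℝ)
        ≤ lam₀ * ‖θ k ω - θdag‖ ^ 2 := by
      intro ω
      have e1 : (J:ℝ)⁻¹ * ∑ j, (inner ℝ (θ k ω - θdag) (gradient (fj j) (θ k ω)) : ℝ)
          = (inner ℝ (θ k ω - θdag) (gradient f (θ k ω)) : ℝ) := by
        rw [hsum (θ k ω), real_inner_smul_right, inner_sum]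
      rw [e1]
      have e2 : gradient f (θ k ω) = gradient f (θ k ω) - gradient f θdag := by
        rw [hθdag, sub_zero]
      rw [e2]
      calc (inner ℝ (θ k ω - θdag) (gradient f (θ k ω) - gradient f θdag) : ℝ)
          ≤ ‖θ k ω - θdag‖ * ‖gradient f (θ k ω) - gradient f θdag‖ :=
            real_inner_le_norm _ _
        _ ≤ ‖θ k ω - θdag‖ * (lam₀ * ‖θ k ω - θdag‖) :=
            mul_le_mul_of_nonneg_left (hLip _ _) (norm_nonneg _)
        _ = lam₀ * ‖θ k ω - θdag‖ ^ 2 := by ring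
    rw [h1, hR]
    calc (∫ ω, (J:ℝ)⁻¹ * ∑ j, (inner ℝ (θ k ω - θdag) (gradient (fj j) (θ k ω)) : ℝ) ∂μ)
        ≤ ∫ ω, lam₀ * ‖θ k ω - θdag‖ ^ 2 ∂μ := by
          apply integral_mono ((integrable_finset_sum _ fun j _ => hBint j).const_mul _)
            (hnX2.const_mul lam₀) h2
      _ = lam₀ * ∫ ω, ‖θ k ω - θdag‖ ^ 2 ∂μ := integral_const_mul _ _
  -- lower bound each cc j
  set M : ℝ := ∫ ω, ‖θ k ω - θdag‖ ∂μ with hMdef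
  have hMnn : 0 ≤ M := integral_nonneg fun ω => norm_nonneg _
  have hRknn : 0 ≤ R k := by
    rw [hR]; exact integral_nonneg fun ω => sq_nonneg _
  have hM : M ≤ Real.sqrt (R k) := by
    rw [hR]
    exact jensen_sqrt μ _ hXmeas.norm.aestronglyMeasurable hnX2
  have hccj : ∀ j, ‖gradient (fj j) θdag‖ ^ 2
      - 2 * lamj j * ‖gradient (fj j) θdag‖ * M ≤ cc j := by
    intro j
    have h2 : ∀ ω, ‖gradient (fj j) θdag‖ ^ 2
        - 2 * lamj j * ‖gradient (fj j) θdag‖ * ‖θ k ω - θdag‖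
        ≤ ‖gradient (fj j) (θ k ω)‖ ^ 2 := by
      intro ω
      set u := gradient (fj j) θdag
      set a := gradient (fj j) (θ k ω)
      have e : ‖a‖ ^ 2 = ‖u‖ ^ 2 + 2 * (inner ℝ u (a - u) : ℝ) + ‖a - u‖ ^ 2 := by
        have := norm_add_sq_real u (a - u)
        rw [show u + (a - u) = a by abel] at this
        exact this
      have h3 := abs_real_inner_le_norm u (a - u)
      have h4 : ‖a - u‖ ≤ lamj j * ‖θ k ω - θdag‖ := hLipj j (θ k ω) θdag
      have h5 : ‖u‖ * ‖a - u‖ ≤ ‖u‖ * (lamj j * ‖θ k ω - θdag‖) :=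
        mul_le_mul_of_nonneg_left h4 (norm_nonneg u)
      have h6 : -(‖u‖ * ‖a - u‖) ≤ (inner ℝ u (a - u) : ℝ) := neg_le_of_abs_le h3
      nlinarith [sq_nonneg (‖a - u‖)]
    have h7 := integral_mono
      ((integrable_const (‖gradient (fj j) θdag‖ ^ 2)).sub
        (hnX1.const_mul (2 * lamj j * ‖gradient (fj j) θdag‖))) (hCint j) h2
    simp only [Pi.sub_apply] at h7
    rw [integral_sub (integrable_const _)
        (hnX1.const_mul (2 * lamj j * ‖gradient (fj j) θdag‖)),
      integral_const, integral_const_mul] at h7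
    simpa [measure_univ] using h7
  -- Cauchy-Schwarz on the sums
  have hT : (J:ℝ)⁻¹ * ∑ j, lamj j * ‖gradient (fj j) θdag‖ ≤ Λ * D₀ := by
    have hcs := Finset.sum_mul_sq_le_sq_mul_sq Finset.univ lamj
      (fun j => ‖gradient (fj j) θdag‖)
    have hΛ2 : Λ ^ 2 = (J:ℝ)⁻¹ * ∑ j, (lamj j) ^ 2 := by
      rw [hΛ, Real.sq_sqrt (by positivity)]
    have hD2 : D₀ ^ 2 = (J:ℝ)⁻¹ * ∑ j, ‖gradient (fj j) θdag‖ ^ 2 := by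
      rw [hD₀, Real.sq_sqrt (by positivity)]
    set T := (J:ℝ)⁻¹ * ∑ j, lamj j * ‖gradient (fj j) θdag‖ with hTdef
    have hsq : T ^ 2 ≤ (Λ * D₀) ^ 2 := by
      have h8 := mul_le_mul_of_nonneg_left hcs
        (by positivity : (0:ℝ) ≤ (J:ℝ)⁻¹ * (J:ℝ)⁻¹)
      calc T ^ 2 = (J:ℝ)⁻¹ * (J:ℝ)⁻¹
            * (∑ j, lamj j * ‖gradient (fj j) θdag‖) ^ 2 := by rw [hTdef]; ring
        _ ≤ (J:ℝ)⁻¹ * (J:ℝ)⁻¹ * ((∑ j, (lamj j) ^ 2)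
            * ∑ j, ‖gradient (fj j) θdag‖ ^ 2) := h8
        _ = (Λ * D₀) ^ 2 := by rw [mul_pow, hΛ2, hD2]; ring
    calc T ≤ |T| := le_abs_self _
      _ = Real.sqrt (T ^ 2) := (Real.sqrt_sq_eq_abs T).symm
      _ ≤ Real.sqrt ((Λ * D₀) ^ 2) := Real.sqrt_le_sqrt hsq
      _ = Λ * D₀ := Real.sqrt_sq (by positivity)
  -- lower bound for the averaged second moment
  have hmc : D₀ ^ 2 - 2 * Real.sqrt (R k) * (Λ * D₀) ≤ (J:ℝ)⁻¹ * ∑ j, cc j := by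
    have hD2 : D₀ ^ 2 = (J:ℝ)⁻¹ * ∑ j, ‖gradient (fj j) θdag‖ ^ 2 := by
      rw [hD₀, Real.sq_sqrt (by positivity)]
    have h1 : (J:ℝ)⁻¹ * ∑ j, (‖gradient (fj j) θdag‖ ^ 2
        - 2 * lamj j * ‖gradient (fj j) θdag‖ * M) ≤ (J:ℝ)⁻¹ * ∑ j, cc j := by
      apply mul_le_mul_of_nonneg_left _ (by positivity : (0:ℝ) ≤ (J:ℝ)⁻¹)
      exact Finset.sum_le_sum fun j _ => hccj j
    have h2 : (J:ℝ)⁻¹ * ∑ j, (‖gradient (fj j) θdag‖ ^ 2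
        - 2 * lamj j * ‖gradient (fj j) θdag‖ * M)
        = D₀ ^ 2 - 2 * M * ((J:ℝ)⁻¹ * ∑ j, lamj j * ‖gradient (fj j) θdag‖) := by
      rw [Finset.sum_sub_distrib, hD2]
      rw [show (∑ j, 2 * lamj j * ‖gradient (fj j) θdag‖ * M)
          = (2 * M) * ∑ j, lamj j * ‖gradient (fj j) θdag‖ from by
        rw [Finset.mul_sum]; exact Finset.sum_congr rfl fun j _ => by ring]
      ring
    rw [h2] at h1
    have h3 : M * ((J:ℝ)⁻¹ * ∑ j, lamj j * ‖gradient (fj j) θdag‖) ≤ M * (Λ * D₀) :=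
      mul_le_mul_of_nonneg_left hT hMnn
    have h4 : M * (Λ * D₀) ≤ Real.sqrt (R k) * (Λ * D₀) :=
      mul_le_mul_of_nonneg_right hM (by positivity)
    linarith
  -- put everything together
  have hfin1 : -2 * η * ((J:ℝ)⁻¹ * ∑ j, b j) ≥ -2 * η * (lam₀ * R k) := by
    have := mul_le_mul_of_nonneg_left hmb (le_of_lt (by linarith : (0:ℝ) < 2 * η))
    linarith
  have hfin2 : η ^ 2 * ((J:ℝ)⁻¹ * ∑ j, cc j)
      ≥ η ^ 2 * (D₀ ^ 2 - 2 * Real.sqrt (R k) * (Λ * D₀)) :=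
    mul_le_mul_of_nonneg_left hmc (sq_nonneg η)
  rw [hRk1']
  nlinarith [hfin1, hfin2]
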